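/- Let S, Q ⊆ ℝ be periodic sequences and let ε ≥ 0. Suppose there is a bijection h : S → Q with |x − h(x)| ≤ ε for all x ∈ S, and suppose 2ε is strictly smaller than every distance between two distinct points of S and every distance between two distinct points of Q. Then Elm(S,Q) ≤ Elm^o(S,Q) ≤ 2ε. In particular, the elastic metrics satisfy Elm(S,Q) ≤ Elm^o(S,Q) ≤ 2·d_B(S,Q) whenever the minimum inter-point distance of S and Q exceeds 2·d_B(S,Q), where d_B is the bottleneck distance. -/

import Mathlib

/-- A periodic sequence in `ℝ` with an `m`-point motif `p` and period `l`:
the set `{p i + l * j : i ∈ Fin m, j ∈ ℤ}` where `0 ≤ p 0 < p 1 < ⋯ < p (m-1) < l`. -/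
structure PSeq (m : ℕ) where
  m_pos : 0 < m
  l : ℝ
  l_pos : 0 < l
  p : Fin m → ℝ
  p_strict : StrictMono p
  p0_nonneg : 0 ≤ p ⟨0, m_pos⟩
  p_lt : ∀ i, p i < l

namespace PSeq

variable {m : ℕ}

/-- The set of points of the periodic sequence. -/
def pts (S : PSeq m) : Set ℝ := {x | ∃ (i : Fin m) (j : ℤ), x = S.p i + S.l * j}

/-- The period is minimal: the same set of points cannot be produced with a smaller period. -/
def IsMinimal (S : PSeq m) : Prop := ∀ (m' : ℕ) (T : PSeq m'), T.pts = S.pts → S.l ≤ T.l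

/-- The distance list `D` of the periodic sequence, indexed by `ZMod m`:
`D i = p (i+1) - p i` for `i < m - 1`, and `D (m-1) = (p 0 + l) - p (m-1)`. -/
noncomputable def D (S : PSeq m) : ZMod m → ℝ := fun i =>
  letI : NeZero m := ⟨S.m_pos.ne'⟩
  if h : i.val + 1 < m then S.p ⟨i.val + 1, h⟩ - S.p ⟨i.val, i.val_lt⟩
  else S.p ⟨0, S.m_pos⟩ + S.l - S.p ⟨i.val, i.val_lt⟩

end PSeq

/-- The cyclic shift `σ_s` acting on vectors indexed by `ZMod n`: `(σ_s v) i = v (i + s)`. -/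
def shiftVec {n : ℕ} (s : ZMod n) (v : ZMod n → ℝ) : ZMod n → ℝ := fun i => v (i + s)

/-- The reversal `ρ`: `(ρ v) i = v (m - 1 - i)` (note `m - 1 = -1` in `ZMod m`). -/
def revVec {n : ℕ} (v : ZMod n → ℝ) : ZMod n → ℝ := fun i => v (-1 - i)

/-- The Minkowski sup-norm `‖v‖_∞ = max_i |v i|` of a vector indexed by `ZMod n`, `n > 0`. -/
noncomputable def supNorm {n : ℕ} (hn : 0 < n) (v : ZMod n → ℝ) : ℝ :=
  letI : NeZero n := ⟨hn.ne'⟩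
  Finset.univ.sup' (Finset.univ_nonempty_iff.mpr ⟨0⟩) fun i => |v i|

namespace PSeq

/-- The distance list of the multiple `(n / m) S` of a periodic sequence `S` with `m ∣ n`,
i.e. the `(n/m)`-fold concatenation of `D S`, indexed by `ZMod n`. -/
noncomputable def Dc {m : ℕ} (S : PSeq m) (n : ℕ) : ZMod n → ℝ :=
  fun i => S.D ((i.val : ZMod m))

/-- The oriented elastic metric `Elm^o(S,Q)`: with `n = lcm(m₁, m₂)`, the minimum over all
cyclic shifts `s ∈ ZMod n` of `‖D((n/m₁)S) - σ_s(D((n/m₂)Q))‖_∞`. -/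
noncomputable def Elmo {m₁ m₂ : ℕ} (S : PSeq m₁) (Q : PSeq m₂) : ℝ :=
  letI : NeZero (Nat.lcm m₁ m₂) := ⟨(Nat.lcm_pos S.m_pos Q.m_pos).ne'⟩
  Finset.univ.inf' (Finset.univ_nonempty_iff.mpr ⟨0⟩)
    fun s : ZMod (Nat.lcm m₁ m₂) =>
      supNorm (Nat.lcm_pos S.m_pos Q.m_pos)
        fun i => S.Dc (Nat.lcm m₁ m₂) i - shiftVec s (Q.Dc (Nat.lcm m₁ m₂)) i

/-- The unoriented elastic metric `Elm(S,Q)`: the minimum over all `2n` permutations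
`σ_s` and `σ_s ∘ ρ` of `‖D((n/m₁)S) - σ(D((n/m₂)Q))‖_∞`, where `n = lcm(m₁, m₂)`. -/
noncomputable def Elm {m₁ m₂ : ℕ} (S : PSeq m₁) (Q : PSeq m₂) : ℝ :=
  letI : NeZero (Nat.lcm m₁ m₂) := ⟨(Nat.lcm_pos S.m_pos Q.m_pos).ne'⟩
  min
    (Finset.univ.inf' (Finset.univ_nonempty_iff.mpr ⟨0⟩)
      fun s : ZMod (Nat.lcm m₁ m₂) =>
        supNorm (Nat.lcm_pos S.m_pos Q.m_pos)
          fun i => S.Dc (Nat.lcm m₁ m₂) i - shiftVec s (Q.Dc (Nat.lcm m₁ m₂)) i)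
    (Finset.univ.inf' (Finset.univ_nonempty_iff.mpr ⟨0⟩)
      fun s : ZMod (Nat.lcm m₁ m₂) =>
        supNorm (Nat.lcm_pos S.m_pos Q.m_pos)
          fun i => S.Dc (Nat.lcm m₁ m₂) i - shiftVec s (revVec (Q.Dc (Nat.lcm m₁ m₂))) i)

end PSeq

namespace PSeq

variable {m : ℕ}

noncomputable def f (S : PSeq m) (n : ℤ) : ℝ :=
  S.p ⟨(n % (m : ℤ)).toNat, by
    have hm : (0:ℤ) < m := by exact_mod_cast S.m_pos
    have h1 := Int.emod_nonneg n hm.ne'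
    have h2 := Int.emod_lt_of_pos n hm
    omega⟩ + S.l * ((n / (m : ℤ) : ℤ) : ℝ)

lemma f_eq (S : PSeq m) (a : ℤ) (k : ℕ) (hk : k < m) (q : ℤ)
    (hh : a = (k : ℤ) + q * m) : S.f a = S.p ⟨k, hk⟩ + S.l * (q : ℝ) := by
  have hm : (0:ℤ) < m := by exact_mod_cast S.m_pos
  have hk' : (k : ℤ) < m := by exact_mod_cast hk
  have hmod : a % (m:ℤ) = k := by
    rw [hh, Int.add_mul_emod_self_right, Int.emod_eq_of_lt (by positivity) hk']
  have hdiv : a / (m:ℤ) = q := by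
    rw [hh, Int.add_mul_ediv_right _ _ hm.ne',
      Int.ediv_eq_zero_of_lt (by positivity) hk', zero_add]
  unfold f
  rw [hdiv]
  congr 1
  exact congrArg S.p (Fin.ext (by show (a % (m:ℤ)).toNat = k; omega))

lemma f_mem (S : PSeq m) (n : ℤ) : S.f n ∈ S.pts := ⟨_, n / m, rfl⟩

lemma f_surj (S : PSeq m) : ∀ x ∈ S.pts, ∃ k : ℤ, S.f k = x := by
  rintro x ⟨i, j, rfl⟩
  exact ⟨(i : ℤ) + j * m, by rw [S.f_eq _ i.val i.isLt j rfl]⟩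

lemma f_step (S : PSeq m) (n : ℤ) : S.f (n + 1) = S.f n + S.D ((n : ZMod m)) := by
  haveI : NeZero m := ⟨S.m_pos.ne'⟩
  have hm : (0:ℤ) < m := by exact_mod_cast S.m_pos
  set i : ZMod m := (n : ZMod m) with hi
  have hval : (i.val : ℤ) = n % m := ZMod.val_intCast n
  have hlt : i.val < m := i.val_lt
  have h1 : n = (i.val : ℤ) + (n / m) * m := by
    have := Int.mul_ediv_add_emod n m
    rw [hval]; linarith
  have hfn : S.f n = S.p ⟨i.val, hlt⟩ + S.l * ((n / (m:ℤ) : ℤ) : ℝ) :=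
    S.f_eq n i.val hlt (n / m) h1
  unfold D
  split_ifs with hc
  · have hfn1 : S.f (n+1) = S.p ⟨i.val + 1, hc⟩ + S.l * ((n / (m:ℤ) : ℤ) : ℝ) :=
      S.f_eq (n+1) (i.val+1) hc (n / m) (by push_cast; linarith)
    rw [hfn1, hfn]; ring
  · have hm1 : (i.val : ℤ) + 1 = m := by omega
    have hfn1 : S.f (n+1) = S.p ⟨0, S.m_pos⟩ + S.l * ((n / (m:ℤ) + 1 : ℤ) : ℝ) :=
      S.f_eq (n+1) 0 S.m_pos (n / m + 1) (by push_cast; linarith)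
    rw [hfn1, hfn]; push_cast; ring

lemma D_pos (S : PSeq m) (i : ZMod m) : 0 < S.D i := by
  haveI : NeZero m := ⟨S.m_pos.ne'⟩
  unfold D
  split_ifs with hc
  · have := S.p_strict (show (⟨i.val, i.val_lt⟩ : Fin m) < ⟨i.val+1, hc⟩ by
      simp [Fin.lt_def])
    linarith
  · have h1 := S.p_lt ⟨i.val, i.val_lt⟩
    have h2 := S.p0_nonneg
    linarith

lemma f_strictMono (S : PSeq m) : StrictMono S.f :=
  strictMono_int_of_lt_succ fun n => by
    rw [S.f_step]
    linarith [S.D_pos ((n : ZMod m))]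

end PSeq

/-- continuity of the elastic metrics: if some bijection `h` between the
points of `S` and of `Q` moves every point by at most `ε`, and `2ε` is smaller than every
distance between distinct points of `S` and of `Q`, then `Elm(S,Q) ≤ Elm^o(S,Q) ≤ 2ε`.
In particular `Elm(S,Q) ≤ Elm^o(S,Q) ≤ 2 d_B(S,Q)` under the corresponding assumption
on the bottleneck distance `d_B`. -/
theorem elastic_metrics_continuity {m₁ m₂ : ℕ} (S : PSeq m₁) (Q : PSeq m₂)
    (ε : ℝ) (hε : 0 ≤ ε)
    (h : ℝ → ℝ) (hbij : Set.BijOn h S.pts Q.pts)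
    (hmove : ∀ x ∈ S.pts, |x - h x| ≤ ε)
    (hsepS : ∀ x ∈ S.pts, ∀ y ∈ S.pts, x ≠ y → 2 * ε < |x - y|)
    (hsepQ : ∀ x ∈ Q.pts, ∀ y ∈ Q.pts, x ≠ y → 2 * ε < |x - y|) :
    PSeq.Elm S Q ≤ PSeq.Elmo S Q ∧ PSeq.Elmo S Q ≤ 2 * ε := by
  classical
  constructor
  · unfold PSeq.Elm PSeq.Elmo
    exact min_le_left _ _
  haveI : NeZero (Nat.lcm m₁ m₂) := ⟨(Nat.lcm_pos S.m_pos Q.m_pos).ne'⟩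
  haveI : NeZero m₁ := ⟨S.m_pos.ne'⟩
  haveI : NeZero m₂ := ⟨Q.m_pos.ne'⟩
  -- order preservation of h
  have hord : ∀ x ∈ S.pts, ∀ y ∈ S.pts, x < y → h x < h y := by
    intro x hx y hy hxy
    have h1 := abs_le.mp (hmove x hx)
    have h2 := abs_le.mp (hmove y hy)
    have h3 := hsepS x hx y hy (ne_of_lt hxy)
    rw [abs_sub_comm, abs_of_pos (by linarith)] at h3
    linarith [h1.1, h1.2, h2.1, h2.2]
  -- the induced map on indices
  have key : ∀ k : ℤ, ∃ j : ℤ, h (S.f k) = Q.f j := by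
    intro k
    obtain ⟨j, hj⟩ := Q.f_surj _ (hbij.mapsTo (S.f_mem k))
    exact ⟨j, hj.symm⟩
  choose φ hφ using key
  have hSmono := S.f_strictMono
  have hQmono := Q.f_strictMono
  have hφmono : StrictMono φ := by
    intro a b hab
    have hlt : h (S.f a) < h (S.f b) := hord _ (S.f_mem a) _ (S.f_mem b) (hSmono hab)
    rw [hφ a, hφ b] at hlt
    exact hQmono.lt_iff_lt.mp hlt
  have hφsurj : Function.Surjective φ := by
    intro j
    obtain ⟨x, hx, hhx⟩ := hbij.surjOn (Q.f_mem j)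
    obtain ⟨k, hk⟩ := S.f_surj x hx
    refine ⟨k, hQmono.injective ?_⟩
    rw [← hφ k, hk, hhx]
  have hφsucc : ∀ k, φ (k + 1) = φ k + 1 := by
    intro k
    have h1 : φ k + 1 ≤ φ (k + 1) := hφmono (lt_add_one k)
    rcases h1.lt_or_eq with h2 | h2
    · exfalso
      obtain ⟨a, ha⟩ := hφsurj (φ k + 1)
      rcases lt_trichotomy a k with h3 | h3 | h3
      · have := hφmono h3; omega
      · rw [h3] at ha; omega
      · have h4 : k + 1 ≤ a := h3
        have h5 : φ (k + 1) ≤ φ a := hφmono.monotone h4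
        omega
    · omega
  set c := φ 0 with hc
  have hφeq : ∀ k, φ k = k + c := by
    intro k
    induction k using Int.induction_on with
    | zero => simp [hc]
    | succ k ih => rw [hφsucc]; omega
    | pred k ih =>
      have h5 := hφsucc (-(k : ℤ) - 1)
      have h6 : (-(k : ℤ) - 1) + 1 = -(k : ℤ) := by ring
      rw [h6] at h5
      omega
  -- gap comparison
  have hgap : ∀ k : ℤ, |S.D ((k : ZMod m₁)) - Q.D (((k + c : ℤ) : ZMod m₂))| ≤ 2 * ε := by
    intro k
    have e1 : S.D ((k : ZMod m₁)) = S.f (k + 1) - S.f k := by rw [S.f_step]; ring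
    have e2 : Q.D (((k + c : ℤ) : ZMod m₂)) = Q.f (k + c + 1) - Q.f (k + c) := by
      rw [Q.f_step]; ring
    have e3 : Q.f (k + c) = h (S.f k) := by rw [hφ k, hφeq]
    have e4 : Q.f (k + c + 1) = h (S.f (k + 1)) := by
      rw [hφ (k + 1), hφeq (k + 1), show k + 1 + c = k + c + 1 from by ring]
    have b1 := abs_le.mp (hmove _ (S.f_mem k))
    have b2 := abs_le.mp (hmove _ (S.f_mem (k + 1)))
    rw [e1, e2, e3, e4, abs_le]
    constructor <;> linarith [b1.1, b1.2, b2.1, b2.2]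
  -- conclude
  unfold PSeq.Elmo
  set s : ZMod (Nat.lcm m₁ m₂) := ((c : ℤ) : ZMod (Nat.lcm m₁ m₂)) with hs
  refine le_trans (Finset.inf'_le _ (Finset.mem_univ s)) ?_
  unfold supNorm
  apply Finset.sup'_le
  intro i _
  show |S.Dc (Nat.lcm m₁ m₂) i - shiftVec s (Q.Dc (Nat.lcm m₁ m₂)) i| ≤ 2 * ε
  have hDc1 : S.Dc (Nat.lcm m₁ m₂) i = S.D (((i.val : ℤ) : ZMod m₁)) := by
    unfold PSeq.Dc; norm_cast
  have hcast : (((i + s).val : ℕ) : ZMod m₂) = (((i.val : ℤ) + c : ℤ) : ZMod m₂) := by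
    have hdvd : ((m₂ : ℕ) : ℤ) ∣ ((Nat.lcm m₁ m₂ : ℕ) : ℤ) :=
      Int.natCast_dvd_natCast.mpr (Nat.dvd_lcm_right _ _)
    have h1 : (((i + s).val : ℤ) : ZMod (Nat.lcm m₁ m₂))
        = (((i.val : ℤ) + c : ℤ) : ZMod (Nat.lcm m₁ m₂)) := by
      push_cast
      simp [ZMod.natCast_val, ZMod.cast_id, ← hs]
    have h3 := ((ZMod.intCast_eq_intCast_iff _ _ _).mp h1).of_dvd hdvd
    have h4 := (ZMod.intCast_eq_intCast_iff _ _ _).mpr h3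
    rw [← h4]; push_cast; ring
  have hDc2 : shiftVec s (Q.Dc (Nat.lcm m₁ m₂)) i = Q.D ((((i.val : ℤ) + c : ℤ) : ZMod m₂)) := by
    unfold shiftVec PSeq.Dc; rw [hcast]
  rw [hDc1, hDc2]
  exact hgap (i.val : ℤ)
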